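/- Let n ≥ 2, let A be a nontrivial subgroup of the free group F_n, and let z ∈ F_n be a nontrivial element such that A and the cyclic subgroup ⟨z⟩ form a free splitting F_n = A * ⟨z⟩. Then the map f ↦ f|_A (restriction to A) is a group isomorphism from the subgroup {f ∈ Aut(F_n) : f(A) = A and f(z) = z} of Aut(F_n) onto the automorphism group Aut(A) of A. In particular, the subgroup of Aut(F_n) of all automorphisms preserving the free splitting F_n = ⟨z⟩ * A and fixing z is isomorphic to Aut(F_{n−1}). -/

import Mathlib

/-- Word metric w.r.t. a generating set `S`: `wordDist S x y` is the least `k` such that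
`x⁻¹ * y` is a product of `k` elements of `S ∪ S⁻¹`. -/
noncomputable def wordDist {G : Type*} [Group G] (S : Set G) (x y : G) : ℕ :=
  sInf {k | ∃ l : List G, l.length = k ∧ (∀ z ∈ l, z ∈ S ∨ z⁻¹ ∈ S) ∧ l.prod = x⁻¹ * y}

/-- Subgroups `A, B` of `G` form a free splitting `G = A * B` if the induced homomorphism
from the free product `A ∗ B` to `G` is an isomorphism. -/
def IsFreeSplitting {G : Type*} [Group G] (A B : Subgroup G) : Prop :=
  Function.Bijective (Monoid.Coprod.lift A.subtype B.subtype)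

open Monoid

/-- The coproduct of two free groups is the free group on the disjoint union. -/
def freeCoprodAux (α β : Type*) :
    Monoid.Coprod (FreeGroup α) (FreeGroup β) ≃* FreeGroup (α ⊕ β) :=
  MonoidHom.toMulEquiv
    (Coprod.lift (FreeGroup.lift fun a => FreeGroup.of (Sum.inl a))
      (FreeGroup.lift fun b => FreeGroup.of (Sum.inr b)))
    (FreeGroup.lift (Sum.elim (fun a => Coprod.inl (FreeGroup.of a))
      (fun b => Coprod.inr (FreeGroup.of b))))
    (by
      refine Coprod.hom_ext ?_ ?_ <;> ext x <;>
        simp)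
    (by
      ext x
      cases x <;> simp)

/-- Given a free splitting `F_n = A * ⟨z⟩`, restriction to `A` is a group isomorphism
from the subgroup of `Aut(F_n)` of automorphisms preserving `A` and fixing `z` onto
`Aut(A)`; in particular this subgroup is isomorphic to `Aut(F_{n-1})`. -/
theorem restriction_iso_of_splitting_stabilizer_fixing_z
    (n : ℕ) (hn : 2 ≤ n)
    (A : Subgroup (FreeGroup (Fin n))) (hA : A ≠ ⊥)
    (z : FreeGroup (Fin n)) (hz : z ≠ 1)
    (hAz : IsFreeSplitting A (Subgroup.zpowers z))
    (H : Subgroup (MulAut (FreeGroup (Fin n))))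
    (hH : ∀ f : MulAut (FreeGroup (Fin n)), f ∈ H ↔
      A.map f.toMonoidHom = A ∧ f z = z) :
    (∃ e : H ≃* MulAut A, ∀ (f : H) (a : A),
        ((e f a : A) : FreeGroup (Fin n)) =
          (f : MulAut (FreeGroup (Fin n))) (a : FreeGroup (Fin n))) ∧
    Nonempty (H ≃* MulAut (FreeGroup (Fin (n - 1)))) := by
  classical
  let F := FreeGroup (Fin n)
  let Z : Subgroup F := Subgroup.zpowers z
  have hAz' : Function.Bijective (Monoid.Coprod.lift A.subtype Z.subtype) := hAz
  let ι : Monoid.Coprod A Z ≃* F := MulEquiv.ofBijective _ hAz'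
  have hι : ∀ x, ι x = Monoid.Coprod.lift A.subtype Z.subtype x := fun _ => rfl
  have hιl : ∀ a : A, ι (Coprod.inl a) = (a : F) := by
    intro a; rw [hι]; simp
  have hιr : ∀ b : Z, ι (Coprod.inr b) = (b : F) := by
    intro b; rw [hι]; simp
  have hsl : ∀ a : A, ι.symm (a : F) = Coprod.inl a := fun a =>
    ι.symm_apply_eq.mpr (hιl a).symm
  have hsr : ∀ b : Z, ι.symm (b : F) = Coprod.inr b := fun b =>
    ι.symm_apply_eq.mpr (hιr b).symm
  have memH : ∀ f : H, A.map ((f : MulAut F)).toMonoidHom = A ∧ (f : MulAut F) z = z :=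
    fun f => (hH f).mp f.2
  -- the restriction map
  let r : H → MulAut A := fun f =>
    (((f : MulAut F)).subgroupMap A).trans (MulEquiv.subgroupCongr (memH f).1)
  have hr : ∀ (f : H) (a : A), ((r f a : A) : F) = (f : MulAut F) (a : F) := fun f a => rfl
  let E : H →* MulAut A :=
    { toFun := r
      map_one' := by
        refine MulEquiv.ext fun a => Subtype.ext ?_
        rw [hr]; rfl
      map_mul' := by
        intro f g
        refine MulEquiv.ext fun a => Subtype.ext ?_
        have h1 : ((r (f * g)) a : F) = ((f * g : H) : MulAut F) (a : F) := hr _ _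
        have h2 : (((r f * r g) a : A) : F) = (f : MulAut F) ((g : MulAut F) (a : F)) := by
          show ((r f (r g a) : A) : F) = _
          rw [hr f (r g a), hr g a]
        rw [h1, h2]; rfl }
  have hgen : A ⊔ Z = ⊤ := by
    have h1 : (Monoid.Coprod.lift A.subtype Z.subtype).range = ⊤ :=
      MonoidHom.range_eq_top_of_surjective _ hAz.2
    rw [Coprod.range_lift, Subgroup.range_subtype, Subgroup.range_subtype] at h1
    exact h1
  have hEinj : Function.Injective E := by
    intro f g hfg
    have key : ∀ (f : H), E f = 1 → f = 1 := by
      intro f hf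
      have h1 : ∀ a : A, (f : MulAut F) (a : F) = a := by
        intro a
        have hrf : r f = 1 := hf
        rw [← hr f a, hrf]; rfl
      have h2 : (f : MulAut F) z = z := (memH f).2
      have hA' : A ≤ MonoidHom.eqLocus (f : MulAut F).toMonoidHom (MonoidHom.id F) := by
        intro x hx; exact h1 ⟨x, hx⟩
      have hZ' : Z ≤ MonoidHom.eqLocus (f : MulAut F).toMonoidHom (MonoidHom.id F) :=
        Subgroup.zpowers_le.mpr h2
      have htop : (⊤ : Subgroup F) ≤
          MonoidHom.eqLocus (f : MulAut F).toMonoidHom (MonoidHom.id F) := by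
        rw [← hgen]; exact sup_le hA' hZ'
      refine Subtype.ext (MulEquiv.ext fun x => ?_)
      exact htop (Subgroup.mem_top x)
    have : E (f * g⁻¹) = 1 := by
      rw [map_mul, map_inv, hfg, mul_inv_cancel]
    have := key _ this
    rw [mul_inv_eq_one] at this
    exact this
  -- surjectivity
  let Φ : MulAut A → (F →* F) := fun u =>
    (Coprod.lift (A.subtype.comp u.toMonoidHom) Z.subtype).comp ι.symm.toMonoidHom
  have hφa : ∀ (u : MulAut A) (a : A), Φ u (a : F) = (u a : F) := by
    intro u a
    show (Coprod.lift (A.subtype.comp u.toMonoidHom) Z.subtype) (ι.symm (a : F)) = _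
    rw [hsl]; simp
  have hφz : ∀ (u : MulAut A) (b : Z), Φ u (b : F) = (b : F) := by
    intro u b
    show (Coprod.lift (A.subtype.comp u.toMonoidHom) Z.subtype) (ι.symm (b : F)) = _
    rw [hsr]; simp
  have hcomp : ∀ u v : MulAut A, (Φ u).comp (Φ v) = Φ (u * v) := by
    intro u v
    have h : ((Φ u).comp (Φ v)).comp ι.toMonoidHom = (Φ (u * v)).comp ι.toMonoidHom := by
      refine Coprod.hom_ext ?_ ?_
      · refine MonoidHom.ext fun a => ?_
        show Φ u (Φ v (ι (Coprod.inl a))) = Φ (u * v) (ι (Coprod.inl a))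
        rw [hιl, hφa v a, hφa u (v a), hφa (u * v) a]; rfl
      · refine MonoidHom.ext fun b => ?_
        show Φ u (Φ v (ι (Coprod.inr b))) = Φ (u * v) (ι (Coprod.inr b))
        rw [hιr, hφz v b, hφz u b, hφz (u * v) b]
    refine MonoidHom.ext fun x => ?_
    obtain ⟨y, rfl⟩ := ι.surjective x
    exact DFunLike.congr_fun h y
  have hid : Φ 1 = MonoidHom.id F := by
    have h : (Φ 1).comp ι.toMonoidHom = (MonoidHom.id F).comp ι.toMonoidHom := by
      refine Coprod.hom_ext ?_ ?_
      · refine MonoidHom.ext fun a => ?_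
        show Φ 1 (ι (Coprod.inl a)) = ι (Coprod.inl a)
        rw [hιl, hφa 1 a]; rfl
      · refine MonoidHom.ext fun b => ?_
        show Φ 1 (ι (Coprod.inr b)) = ι (Coprod.inr b)
        rw [hιr, hφz 1 b]
    refine MonoidHom.ext fun x => ?_
    obtain ⟨y, rfl⟩ := ι.surjective x
    exact DFunLike.congr_fun h y
  have hEsurj : Function.Surjective E := by
    intro g
    let fg : F ≃* F := MonoidHom.toMulEquiv (Φ g) (Φ g⁻¹)
      (by rw [hcomp, inv_mul_cancel, hid]) (by rw [hcomp, mul_inv_cancel, hid])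
    have hfg : ∀ x : F, fg x = Φ g x := fun _ => rfl
    have hmem : fg ∈ H := by
      rw [hH]
      constructor
      · apply le_antisymm
        · rintro _ ⟨a, ha, rfl⟩
          show Φ g a ∈ A
          rw [show (a : F) = ((⟨a, ha⟩ : A) : F) from rfl, hφa]
          exact (g ⟨a, ha⟩).2
        · intro a ha
          refine ⟨(g⁻¹ ⟨a, ha⟩ : A), (g⁻¹ ⟨a, ha⟩ : A).2, ?_⟩
          show Φ g ((g⁻¹ ⟨a, ha⟩ : A) : F) = a
          rw [hφa]
          simp
      · show Φ g z = z
        exact hφz g ⟨z, Subgroup.mem_zpowers z⟩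
    refine ⟨⟨fg, hmem⟩, ?_⟩
    refine MulEquiv.ext fun a => Subtype.ext ?_
    show ((r ⟨fg, hmem⟩ a : A) : F) = (g a : F)
    rw [hr]
    exact hφa g a
  let e : H ≃* MulAut A := MulEquiv.ofBijective E ⟨hEinj, hEsurj⟩
  have he : ∀ (f : H) (a : A), ((e f a : A) : F) = (f : MulAut F) (a : F) := fun f a => hr f a
  refine ⟨⟨e, he⟩, ?_⟩
  -- second part: A ≅ F_{n-1}
  haveI : IsFreeGroup A := inferInstance
  haveI : IsFreeGroup Z := inferInstance
  let S := IsFreeGroup.Generators A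
  let eA : A ≃* FreeGroup S := IsFreeGroup.toFreeGroup A
  let T := IsFreeGroup.Generators Z
  let eZ0 : Z ≃* FreeGroup T := IsFreeGroup.toFreeGroup Z
  have hZcomm : ∀ x y : Z, x * y = y * x := by
    rintro ⟨x, m, rfl⟩ ⟨y, k, rfl⟩
    refine Subtype.ext ?_
    show z ^ m * z ^ k = z ^ k * z ^ m
    rw [← zpow_add, ← zpow_add, add_comm]
  haveI hTsub : Subsingleton T := by
    constructor
    intro a b
    by_contra hab
    let f : T → Equiv.Perm (Fin 3) := fun x => if x = a then Equiv.swap 0 1 else Equiv.swap 1 2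
    have hcomm : FreeGroup.of a * FreeGroup.of b = FreeGroup.of b * FreeGroup.of a := by
      have h1 : eZ0 (eZ0.symm (FreeGroup.of a) * eZ0.symm (FreeGroup.of b)) =
          eZ0 (eZ0.symm (FreeGroup.of b) * eZ0.symm (FreeGroup.of a)) := by
        rw [hZcomm]
      simpa using h1
    have h2 := congrArg (FreeGroup.lift f) hcomm
    simp only [map_mul, FreeGroup.lift_apply_of] at h2
    have hfa : f a = Equiv.swap 0 1 := if_pos rfl
    have hfb : f b = Equiv.swap 1 2 := if_neg (fun h => hab h.symm)
    rw [hfa, hfb] at h2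
    exact absurd h2 (by decide)
  haveI hTne : Nonempty T := by
    by_contra hne
    haveI : IsEmpty T := not_nonempty_iff.mp hne
    have : (⟨z, Subgroup.mem_zpowers z⟩ : Z) = (1 : Z) := by
      apply eZ0.injective
      exact Subsingleton.elim _ _
    exact hz (congrArg Subtype.val this)
  haveI : Unique T := uniqueOfSubsingleton (Classical.arbitrary T)
  let eZ : Z ≃* FreeGroup Unit := eZ0.trans (FreeGroup.freeGroupCongr (Equiv.ofUnique T Unit))
  let big : FreeGroup (Fin n) ≃* FreeGroup (S ⊕ Unit) :=
    ι.symm.trans ((MulEquiv.coprodCongr eA eZ).trans (freeCoprodAux S Unit))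
  let eqv : Fin n ≃ S ⊕ Unit := Equiv.ofFreeGroupEquiv big
  haveI : Finite (S ⊕ Unit) := Finite.of_equiv _ eqv
  haveI : Finite S := Finite.of_injective (Sum.inl : S → S ⊕ Unit) Sum.inl_injective
  have hcard : Nat.card S + 1 = n := by
    have h1 : Nat.card (Fin n) = Nat.card (S ⊕ Unit) := Nat.card_congr eqv
    rw [Nat.card_eq_fintype_card, Fintype.card_fin] at h1
    rw [Nat.card_sum] at h1
    simpa using h1.symm
  have hcard' : Nat.card S = n - 1 := by omega
  let eS : S ≃ Fin (n - 1) := Finite.equivFinOfCardEq hcard'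
  let eFin : A ≃* FreeGroup (Fin (n - 1)) := eA.trans (FreeGroup.freeGroupCongr eS)
  exact ⟨e.trans (MulAut.congr eFin)⟩
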